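/- Let l₁, l₂, l₃ ∈ ℤ² be primitive vectors and set a₁ = det(l₂, l₃), a₂ = det(l₃, l₁), a₃ = det(l₁, l₂), where det(u, v) := u₁v₂ − u₂v₁. Assume a₁ > 0 and a₃ > 0. Then for every pair of distinct indices i, j ∈ {1, 2, 3} one has gcd(a_i, a_j) = gcd(a₁, gcd(a₂, a₃)). -/

import Mathlib

/-- The determinant of two vectors in ℤ². -/
def det2 (u v : ℤ × ℤ) : ℤ := u.1 * v.2 - u.2 * v.1

/-- A vector of ℤ² is primitive if its coordinates are coprime. -/
def IsPrimitive (u : ℤ × ℤ) : Prop := Int.gcd u.1 u.2 = 1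

lemma key_dvd (d b x y : ℤ) (hprim : Int.gcd x y = 1) (h1 : d ∣ b * x) (h2 : d ∣ b * y) :
    d ∣ b := by
  have h := Int.dvd_coe_gcd h1 h2
  rw [Int.gcd_mul_left, hprim, mul_one, Int.dvd_natAbs] at h
  exact h

/-- For primitive vectors l₁, l₂, l₃ ∈ ℤ² with a₁ = det(l₂,l₃) > 0,
a₂ = det(l₃,l₁), a₃ = det(l₁,l₂) > 0, one has gcd(a_i, a_j) = gcd(a₁, a₂, a₃) for all
distinct indices i, j. -/
theorem stmt_10 (l₁ l₂ l₃ : ℤ × ℤ)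
    (h₁ : IsPrimitive l₁) (h₂ : IsPrimitive l₂) (h₃ : IsPrimitive l₃)
    (a : Fin 3 → ℤ)
    (ha : a = ![det2 l₂ l₃, det2 l₃ l₁, det2 l₁ l₂])
    (ha₁ : 0 < a 0) (ha₃ : 0 < a 2) :
    ∀ i j : Fin 3, i ≠ j → Int.gcd (a i) (a j) = Int.gcd (a 0) (Int.gcd (a 1) (a 2)) := by
  subst ha
  set A0 := det2 l₂ l₃ with hA0
  set A1 := det2 l₃ l₁ with hA1
  set A2 := det2 l₁ l₂ with hA2
  have e1 : A2 * l₃.1 = -(A0 * l₁.1 + A1 * l₂.1) := by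
    simp only [hA0, hA1, hA2, det2]; ring
  have e2 : A2 * l₃.2 = -(A0 * l₁.2 + A1 * l₂.2) := by
    simp only [hA0, hA1, hA2, det2]; ring
  have f1 : A1 * l₂.1 = -(A0 * l₁.1 + A2 * l₃.1) := by
    simp only [hA0, hA1, hA2, det2]; ring
  have f2 : A1 * l₂.2 = -(A0 * l₁.2 + A2 * l₃.2) := by
    simp only [hA0, hA1, hA2, det2]; ring
  have g1 : A0 * l₁.1 = -(A1 * l₂.1 + A2 * l₃.1) := by
    simp only [hA0, hA1, hA2, det2]; ring
  have g2 : A0 * l₁.2 = -(A1 * l₂.2 + A2 * l₃.2) := by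
    simp only [hA0, hA1, hA2, det2]; ring
  -- common divisor of two divides the third
  have d01 : ∀ d : ℤ, d ∣ A0 → d ∣ A1 → d ∣ A2 := by
    intro d h0 h1'
    refine key_dvd d A2 l₃.1 l₃.2 h₃ ?_ ?_
    · rw [e1]; exact dvd_neg.mpr (dvd_add (h0.mul_right _) (h1'.mul_right _))
    · rw [e2]; exact dvd_neg.mpr (dvd_add (h0.mul_right _) (h1'.mul_right _))
  have d02 : ∀ d : ℤ, d ∣ A0 → d ∣ A2 → d ∣ A1 := by
    intro d h0 h2'
    refine key_dvd d A1 l₂.1 l₂.2 h₂ ?_ ?_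
    · rw [f1]; exact dvd_neg.mpr (dvd_add (h0.mul_right _) (h2'.mul_right _))
    · rw [f2]; exact dvd_neg.mpr (dvd_add (h0.mul_right _) (h2'.mul_right _))
  have d12 : ∀ d : ℤ, d ∣ A1 → d ∣ A2 → d ∣ A0 := by
    intro d h1' h2'
    refine key_dvd d A0 l₁.1 l₁.2 h₁ ?_ ?_
    · rw [g1]; exact dvd_neg.mpr (dvd_add (h1'.mul_right _) (h2'.mul_right _))
    · rw [g2]; exact dvd_neg.mpr (dvd_add (h1'.mul_right _) (h2'.mul_right _))
  set G := Int.gcd A0 (Int.gcd A1 A2) with hG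
  have hG0 : (G : ℤ) ∣ A0 := Int.gcd_dvd_left _ _
  have hG12 : (G : ℤ) ∣ (Int.gcd A1 A2 : ℤ) := Int.gcd_dvd_right _ _
  have hG1 : (G : ℤ) ∣ A1 := hG12.trans (Int.gcd_dvd_left _ _)
  have hG2 : (G : ℤ) ∣ A2 := hG12.trans (Int.gcd_dvd_right _ _)
  have pair : ∀ x y : ℤ, (G : ℤ) ∣ x → (G : ℤ) ∣ y →
      (∀ d : ℤ, d ∣ x → d ∣ y → d ∣ A0 ∧ d ∣ A1 ∧ d ∣ A2) → Int.gcd x y = G := by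
    intro x y hx hy h
    have hd := h _ (Int.gcd_dvd_left _ _) (Int.gcd_dvd_right _ _)
    have hdG : ((Int.gcd x y : ℕ) : ℤ) ∣ (G : ℤ) :=
      Int.dvd_coe_gcd hd.1 (by exact_mod_cast Int.dvd_coe_gcd hd.2.1 hd.2.2)
    have hGd : (G : ℤ) ∣ ((Int.gcd x y : ℕ) : ℤ) := Int.dvd_coe_gcd hx hy
    exact Nat.dvd_antisymm (by exact_mod_cast hdG) (by exact_mod_cast hGd)
  have p01 : Int.gcd A0 A1 = G := pair _ _ hG0 hG1 (fun d h h' => ⟨h, h', d01 d h h'⟩)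
  have p10 : Int.gcd A1 A0 = G := pair _ _ hG1 hG0 (fun d h h' => ⟨h', h, d01 d h' h⟩)
  have p02 : Int.gcd A0 A2 = G := pair _ _ hG0 hG2 (fun d h h' => ⟨h, d02 d h h', h'⟩)
  have p20 : Int.gcd A2 A0 = G := pair _ _ hG2 hG0 (fun d h h' => ⟨h', d02 d h' h, h⟩)
  have p12 : Int.gcd A1 A2 = G := pair _ _ hG1 hG2 (fun d h h' => ⟨d12 d h h', h, h'⟩)
  have p21 : Int.gcd A2 A1 = G := pair _ _ hG2 hG1 (fun d h h' => ⟨d12 d h' h, h', h⟩)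
  intro i j hij
  fin_cases i <;> fin_cases j <;>
    first
      | exact absurd rfl hij
      | exact p01 | exact p10 | exact p02 | exact p20 | exact p12 | exact p21
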